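/- In an atomic representable algebra A satisfying (Ax1)–(Ax5), the map θ sending a to {(x,y) : x, y atoms of A, x ∼ y, y ≤ a} is an injective homomorphism of {-, ▷}-algebras into the algebra of partial functions on the set of atoms of A (with relative complement and domain restriction), i.e., each θ(a) is a partial function, θ(a - b) = θ(a) - θ(b), and θ(a ▷ b) = θ(a) ▷ θ(b). -/

import Mathlib

/-- The induced semilattice order: `a ≤ b` iff `a·b = a` where `a·b := a - (a - b)`. -/
def sle {A : Type*} (sub : A → A → A) (a b : A) : Prop := sub a (sub a b) = a

/-- The domain-containment preorder: `a ≼ b` iff `b ▷ a = a`. -/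
def sprec {A : Type*} (rest : A → A → A) (a b : A) : Prop := rest b a = a

/-- The equivalence induced by `≼`. -/
def seqv {A : Type*} (rest : A → A → A) (a b : A) : Prop :=
  sprec rest a b ∧ sprec rest b a

/-- `x` is an atom: a minimal nonzero element (`z` is the zero). -/
def isAtomS {A : Type*} (sub : A → A → A) (z x : A) : Prop :=
  x ≠ z ∧ ∀ b, sle sub b x → b = z ∨ b = x

/-- The atomic representation `θ(a) = {(x,y) : x, y atoms, x ∼ y, y ≤ a}`. -/
def theta {A : Type*} (sub rest : A → A → A) (z a : A) : Set (A × A) :=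
  {p | isAtomS sub z p.1 ∧ isAtomS sub z p.2 ∧ seqv rest p.1 p.2 ∧ sle sub p.2 a}

/-- Domain restriction of partial functions (as sets of pairs). -/
def restr {X Y : Type*} (f g : Set (X × Y)) : Set (X × Y) :=
  {p | (∃ y, (p.1, y) ∈ f) ∧ p ∈ g}

/-- `f` is a partial function. -/
def IsPFun {X Y : Type*} (f : Set (X × Y)) : Prop :=
  ∀ x y z, (x, y) ∈ f → (x, z) ∈ f → y = z


section SubLemmas
variable {A : Type*} {sub : A → A → A} {z : A}

lemma sz (ax1 : ∀ a b : A, sub a (sub b a) = a) (hz : ∀ a : A, sub a a = z)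
    (a : A) : sub a z = a := by
  have h := ax1 a a; rwa [hz] at h

lemma zs (ax1 : ∀ a b : A, sub a (sub b a) = a) (hz : ∀ a : A, sub a a = z)
    (a : A) : sub z a = z := by
  have h := ax1 z a; rwa [sz ax1 hz] at h

lemma diff_le (ax3 : ∀ a b c : A, sub (sub a b) c = sub (sub a c) b)
    (ax1 : ∀ a b : A, sub a (sub b a) = a) (hz : ∀ a : A, sub a a = z)
    (a b : A) : sub (sub a b) a = z := by
  rw [ax3 a b a, hz, zs ax1 hz]

lemma le_char (ax2 : ∀ a b : A, sub a (sub a b) = sub b (sub b a))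
    (ax1 : ∀ a b : A, sub a (sub b a) = a) (hz : ∀ a : A, sub a a = z)
    {a b : A} (h : sub a b = z) : sub b (sub b a) = a := by
  rw [← ax2 a b, h, sz ax1 hz]

lemma sle_trans' (ax1 : ∀ a b : A, sub a (sub b a) = a)
    (ax2 : ∀ a b : A, sub a (sub a b) = sub b (sub b a))
    (ax3 : ∀ a b c : A, sub (sub a b) c = sub (sub a c) b)
    (hz : ∀ a : A, sub a a = z)
    {a b c : A} (h1 : sub a b = z) (h2 : sub b c = z) : sub a c = z := by
  have ha := le_char ax2 ax1 hz h1
  calc sub a c = sub (sub b (sub b a)) c := by rw [ha]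
    _ = sub (sub b c) (sub b a) := ax3 b (sub b a) c
    _ = z := by rw [h2, zs ax1 hz]

lemma le_antisym (ax1 : ∀ a b : A, sub a (sub b a) = a)
    (ax2 : ∀ a b : A, sub a (sub a b) = sub b (sub b a))
    (hz : ∀ a : A, sub a a = z)
    {a b : A} (h1 : sub a b = z) (h2 : sub b a = z) : a = b := by
  calc a = sub a z := (sz ax1 hz a).symm
    _ = sub a (sub a b) := by rw [h1]
    _ = sub b (sub b a) := ax2 a b
    _ = sub b z := by rw [h2]
    _ = b := sz ax1 hz b

lemma p1 (ax1 : ∀ a b : A, sub a (sub b a) = a) (a b : A) :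
    sub (sub a b) b = sub a b := by
  have h := ax1 (sub a b) b
  rwa [ax1 b a] at h

lemma mono_sub (ax1 : ∀ a b : A, sub a (sub b a) = a)
    (ax2 : ∀ a b : A, sub a (sub a b) = sub b (sub b a))
    (ax3 : ∀ a b c : A, sub (sub a b) c = sub (sub a c) b)
    (hz : ∀ a : A, sub a a = z)
    {a b : A} (c : A) (h : sub a b = z) : sub (sub a c) (sub b c) = z := by
  have ha := le_char ax2 ax1 hz h
  calc sub (sub a c) (sub b c)
      = sub (sub (sub b (sub b a)) c) (sub b c) := by rw [ha]
    _ = sub (sub (sub b c) (sub b a)) (sub b c) := by rw [ax3 b (sub b a) c]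
    _ = z := diff_le ax3 ax1 hz (sub b c) (sub b a)

lemma key_sub (ax1 : ∀ a b : A, sub a (sub b a) = a)
    (ax2 : ∀ a b : A, sub a (sub a b) = sub b (sub b a))
    (ax3 : ∀ a b c : A, sub (sub a b) c = sub (sub a c) b)
    (hz : ∀ a : A, sub a a = z)
    (x y c : A) : sub (sub (sub x c) (sub y c)) (sub x y) = z := by
  have h1 : sub (sub x c) (sub x y) = sub (sub y (sub y x)) c := by
    rw [← ax3 x (sub x y) c, ax2 x y]
  calc sub (sub (sub x c) (sub y c)) (sub x y)
      = sub (sub (sub x c) (sub x y)) (sub y c) := ax3 (sub x c) (sub y c) (sub x y)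
    _ = sub (sub (sub y (sub y x)) c) (sub y c) := by rw [h1]
    _ = z := mono_sub ax1 ax2 ax3 hz c (diff_le ax3 ax1 hz y (sub y x))

end SubLemmas

section RestLemmas
variable {A : Type*} {sub rest : A → A → A} {z : A}

/-- `rest a a = a` -/
lemma restD1 (ax1 : ∀ a b : A, sub a (sub b a) = a)
    (ax5 : ∀ a b : A, rest (sub a (sub a b)) a = sub a (sub a b))
    (hz : ∀ a : A, sub a a = z) (a : A) : rest a a = a := by
  have h := ax5 a a
  rwa [hz, sz ax1 hz] at h

/-- if `u ≤ a` then `rest u a = u` -/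
lemma rest_of_le (ax1 : ∀ a b : A, sub a (sub b a) = a)
    (ax2 : ∀ a b : A, sub a (sub a b) = sub b (sub b a))
    (ax5 : ∀ a b : A, rest (sub a (sub a b)) a = sub a (sub a b))
    (hz : ∀ a : A, sub a a = z)
    {u a : A} (h : sub u a = z) : rest u a = u := by
  have hu : sub a (sub a u) = u := by rw [ax2 a u, h, sz ax1 hz]
  have h5 := ax5 a u
  rwa [hu] at h5

/-- D2 : `rest a b ≤ b` (as meet equation) -/
lemma restD2meet (ax1 : ∀ a b : A, sub a (sub b a) = a)
    (ax2 : ∀ a b : A, sub a (sub a b) = sub b (sub b a))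
    (ax4 : ∀ a b c : A, sub (rest a c) (sub (rest a c) (rest b c)) = rest (rest a b) c)
    (ax5 : ∀ a b : A, rest (sub a (sub a b)) a = sub a (sub a b))
    (a b : A) : sub (rest a b) (sub (rest a b) b) = rest a b := by
  have h0 := ax5 (rest b (rest a b)) (rest b (rest a b))
  have h1 := ax2 (rest b (rest a b)) (rest a (rest a b))
  have h2 := ax5 (rest b (rest a b)) (rest a (rest a b))
  have h3 := ax4 (rest a b) (rest b (rest a b)) (rest b (rest a b))
  have h4 := ax1 (rest a b) (rest a b)
  have h5 := ax5 (rest a b) (rest a b)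
  have h6 := ax5 (rest a b) b
  have h7 := ax4 (rest a b) b (rest (rest a b) (rest a b))
  have h8 := ax4 a b (rest a b)
  have h9 := ax4 a b b
  have h10 := ax1 b b
  have h11 := ax5 b b
  have h12 := ax4 b b (rest (rest a b) (rest a b))
  grind

/-- D2 in `sub _ _ = z` form -/
lemma restD2 (ax1 : ∀ a b : A, sub a (sub b a) = a)
    (ax2 : ∀ a b : A, sub a (sub a b) = sub b (sub b a))
    (ax3 : ∀ a b c : A, sub (sub a b) c = sub (sub a c) b)
    (ax4 : ∀ a b c : A, sub (rest a c) (sub (rest a c) (rest b c)) = rest (rest a b) c)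
    (ax5 : ∀ a b : A, rest (sub a (sub a b)) a = sub a (sub a b))
    (hz : ∀ a : A, sub a a = z)
    (a b : A) : sub (rest a b) b = z := by
  have h := restD2meet ax1 ax2 ax4 ax5 a b
  calc sub (rest a b) b
      = sub (sub (rest a b) (sub (rest a b) b)) b := by rw [h]
    _ = sub (sub (rest a b) b) (sub (rest a b) b) := ax3 (rest a b) (sub (rest a b) b) b
    _ = z := hz _

lemma rest_zero (ax1 : ∀ a b : A, sub a (sub b a) = a)
    (ax2 : ∀ a b : A, sub a (sub a b) = sub b (sub b a))
    (ax5 : ∀ a b : A, rest (sub a (sub a b)) a = sub a (sub a b))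
    (hz : ∀ a : A, sub a a = z)
    (b : A) : rest z b = z :=
  rest_of_le ax1 ax2 ax5 hz (zs ax1 hz b)

/-- from `meet X Y = Y` deduce `sub Y X = z` -/
lemma le_of_meet_eq (ax1 : ∀ a b : A, sub a (sub b a) = a)
    (ax2 : ∀ a b : A, sub a (sub a b) = sub b (sub b a))
    (ax3 : ∀ a b c : A, sub (sub a b) c = sub (sub a c) b)
    (hz : ∀ a : A, sub a a = z)
    {X Y : A} (h : sub X (sub X Y) = Y) : sub Y X = z := by
  have h2 : sub Y (sub Y X) = Y := by rw [← ax2 X Y, h]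
  calc sub Y X = sub (sub Y (sub Y X)) X := by rw [h2]
    _ = sub (sub Y X) (sub Y X) := ax3 Y (sub Y X) X
    _ = z := hz _

/-- J0: `rest a (rest a b) = rest a b` -/
lemma restJ0 (ax1 : ∀ a b : A, sub a (sub b a) = a)
    (ax2 : ∀ a b : A, sub a (sub a b) = sub b (sub b a))
    (ax3 : ∀ a b c : A, sub (sub a b) c = sub (sub a c) b)
    (ax4 : ∀ a b c : A, sub (rest a c) (sub (rest a c) (rest b c)) = rest (rest a b) c)
    (ax5 : ∀ a b : A, rest (sub a (sub a b)) a = sub a (sub a b))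
    (hz : ∀ a : A, sub a a = z)
    (a b : A) : rest a (rest a b) = rest a b := by
  set s := rest a b with hs
  have h4 := ax4 a b s
  rw [← hs, restD1 ax1 ax5 hz s] at h4
  -- h4 : meet (rest a s) (rest b s) = s ; so s ≤ rest a s
  have hle : sub s (rest a s) = z := by
    calc sub s (rest a s)
        = sub (sub (rest a s) (sub (rest a s) (rest b s))) (rest a s) := by rw [h4]
      _ = z := diff_le ax3 ax1 hz (rest a s) (sub (rest a s) (rest b s))
  exact le_antisym ax1 ax2 hz (restD2 ax1 ax2 ax3 ax4 ax5 hz a s) hle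

/-- transitivity of ≼ -/
lemma prec_trans (ax1 : ∀ a b : A, sub a (sub b a) = a)
    (ax2 : ∀ a b : A, sub a (sub a b) = sub b (sub b a))
    (ax3 : ∀ a b c : A, sub (sub a b) c = sub (sub a c) b)
    (ax4 : ∀ a b c : A, sub (rest a c) (sub (rest a c) (rest b c)) = rest (rest a b) c)
    (ax5 : ∀ a b : A, rest (sub a (sub a b)) a = sub a (sub a b))
    (hz : ∀ a : A, sub a a = z)
    {a b c : A} (h1 : rest b a = a) (h2 : rest c b = b) : rest c a = a := by
  have h4 := ax4 c b a
  rw [h2, h1] at h4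
  -- h4 : meet (rest c a) a = a
  have hle : sub a (rest c a) = z := by
    calc sub a (rest c a)
        = sub (sub (rest c a) (sub (rest c a) a)) (rest c a) := by rw [h4]
      _ = z := diff_le ax3 ax1 hz (rest c a) (sub (rest c a) a)
  exact le_antisym ax1 ax2 hz (restD2 ax1 ax2 ax3 ax4 ax5 hz c a) hle

/-- `u ≤ v → u ≼ v` -/
lemma prec_of_le (ax1 : ∀ a b : A, sub a (sub b a) = a)
    (ax2 : ∀ a b : A, sub a (sub a b) = sub b (sub b a))
    (ax3 : ∀ a b c : A, sub (sub a b) c = sub (sub a c) b)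
    (ax4 : ∀ a b c : A, sub (rest a c) (sub (rest a c) (rest b c)) = rest (rest a b) c)
    (ax5 : ∀ a b : A, rest (sub a (sub a b)) a = sub a (sub a b))
    (hz : ∀ a : A, sub a a = z)
    {u v : A} (h : sub u v = z) : rest v u = u := by
  have h4 := ax4 u v u
  rw [restD1 ax1 ax5 hz u, rest_of_le ax1 ax2 ax5 hz h, restD1 ax1 ax5 hz u] at h4
  -- h4 : meet u (rest v u) = u
  have hle : sub u (rest v u) = z := by
    calc sub u (rest v u)
        = sub (sub u (sub u (rest v u))) (rest v u) := by rw [h4]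
      _ = sub (sub u (rest v u)) (sub u (rest v u)) := ax3 u (sub u (rest v u)) (rest v u)
      _ = z := hz _
  exact le_antisym ax1 ax2 hz (restD2 ax1 ax2 ax3 ax4 ax5 hz v u) hle
end RestLemmas

section AtomLemmas
variable {A : Type*} {sub rest : A → A → A} {z : A}

lemma sle_of_z (ax1 : ∀ a b : A, sub a (sub b a) = a) (hz : ∀ a : A, sub a a = z)
    {a b : A} (h : sub a b = z) : sle sub a b := by
  unfold sle; rw [h, sz ax1 hz]

lemma z_of_sle (ax3 : ∀ a b c : A, sub (sub a b) c = sub (sub a c) b)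
    (hz : ∀ a : A, sub a a = z)
    {a b : A} (h : sle sub a b) : sub a b = z := by
  unfold sle at h
  calc sub a b = sub (sub a (sub a b)) b := by rw [h]
    _ = sub (sub a b) (sub a b) := ax3 a (sub a b) b
    _ = z := hz _

lemma atom_sub_fwd (ax1 : ∀ a b : A, sub a (sub b a) = a)
    (ax2 : ∀ a b : A, sub a (sub a b) = sub b (sub b a))
    (ax3 : ∀ a b c : A, sub (sub a b) c = sub (sub a c) b)
    (hz : ∀ a : A, sub a a = z)
    {y a b : A} (hy : y ≠ z) (h : sub y (sub a b) = z) :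
    sub y a = z ∧ sub y b ≠ z := by
  constructor
  · exact sle_trans' ax1 ax2 ax3 hz h (diff_le ax3 ax1 hz a b)
  · intro hb
    apply hy
    have hy2 : sub (sub a b) (sub (sub a b) y) = y := le_char ax2 ax1 hz h
    have : sub y b = y := by
      calc sub y b
          = sub (sub (sub a b) (sub (sub a b) y)) b := by rw [hy2]
        _ = sub (sub (sub a b) b) (sub (sub a b) y) := ax3 (sub a b) (sub (sub a b) y) b
        _ = sub (sub a b) (sub (sub a b) y) := by rw [p1 ax1 a b]
        _ = y := hy2
    rw [← this, hb]

lemma atom_sub_bwd (ax1 : ∀ a b : A, sub a (sub b a) = a)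
    (ax2 : ∀ a b : A, sub a (sub a b) = sub b (sub b a))
    (ax3 : ∀ a b c : A, sub (sub a b) c = sub (sub a c) b)
    (hz : ∀ a : A, sub a a = z)
    {y a b : A} (hy : isAtomS sub z y) (ya : sub y a = z) (hnb : sub y b ≠ z) :
    sub y (sub a b) = z := by
  have hyb : sub y b = y := by
    rcases hy.2 (sub y b) (sle_of_z ax1 hz (diff_le ax3 ax1 hz y b)) with h | h
    · exact absurd h hnb
    · exact h
  have key := key_sub ax1 ax2 ax3 hz y a b
  rwa [hyb, ya, sz ax1 hz] at key

lemma atom_prec (ax1 : ∀ a b : A, sub a (sub b a) = a)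
    (ax2 : ∀ a b : A, sub a (sub a b) = sub b (sub b a))
    (ax3 : ∀ a b c : A, sub (sub a b) c = sub (sub a c) b)
    (ax4 : ∀ a b c : A, sub (rest a c) (sub (rest a c) (rest b c)) = rest (rest a b) c)
    (ax5 : ∀ a b : A, rest (sub a (sub a b)) a = sub a (sub a b))
    (hz : ∀ a : A, sub a a = z)
    {y w : A} (hy : isAtomS sub z y) (hw : w ≠ z) (h : rest y w = w) :
    rest w y = y := by
  rcases hy.2 (rest w y) (sle_of_z ax1 hz (restD2 ax1 ax2 ax3 ax4 ax5 hz w y)) with hc | hc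
  · exfalso
    have h4 := ax4 w y w
    rw [restD1 ax1 ax5 hz w, h, hc, rest_zero ax1 ax2 ax5 hz w, hz w, sz ax1 hz w] at h4
    exact hw h4
  · exact hc

lemma mem_theta {x y a : A} :
    (x, y) ∈ theta sub rest z a ↔
      isAtomS sub z x ∧ isAtomS sub z y ∧ seqv rest x y ∧ sle sub y a := Iff.rfl

end AtomLemmas

theorem stmt19 {A : Type*} (sub rest : A → A → A)
    (ax1 : ∀ a b : A, sub a (sub b a) = a)
    (ax2 : ∀ a b : A, sub a (sub a b) = sub b (sub b a))
    (ax3 : ∀ a b c : A, sub (sub a b) c = sub (sub a c) b)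
    (ax4 : ∀ a b c : A, sub (rest a c) (sub (rest a c) (rest b c)) = rest (rest a b) c)
    (ax5 : ∀ a b : A, rest (sub a (sub a b)) a = sub a (sub a b))
    (z : A) (hz : ∀ a : A, sub a a = z)
    (atomic : ∀ a : A, a ≠ z → ∃ x, isAtomS sub z x ∧ sle sub x a) :
    (∀ a : A, IsPFun (theta sub rest z a)) ∧
    (∀ a b : A, theta sub rest z (sub a b) = theta sub rest z a \ theta sub rest z b) ∧
    (∀ a b : A, theta sub rest z (rest a b) = restr (theta sub rest z a) (theta sub rest z b)) ∧
    Function.Injective (theta sub rest z) := by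
  -- Goal 1 : each theta a is a partial function
  have G1 : ∀ a : A, IsPFun (theta sub rest z a) := by
    intro a x y1 y2 h1 h2
    rw [mem_theta] at h1 h2
    obtain ⟨hx, hy1, hq1, hle1⟩ := h1
    obtain ⟨-, hy2, hq2, hle2⟩ := h2
    have hz1 : sub y1 a = z := z_of_sle ax3 hz hle1
    have hz2 : sub y2 a = z := z_of_sle ax3 hz hle2
    -- y2 ≼ y1 and y1 ≼ y2
    have h21 : rest y1 y2 = y2 := prec_trans ax1 ax2 ax3 ax4 ax5 hz hq2.2 hq1.1
    have h12 : rest y2 y1 = y1 := prec_trans ax1 ax2 ax3 ax4 ax5 hz hq1.2 hq2.1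
    have h4 := ax4 y1 y2 a
    rw [rest_of_le ax1 ax2 ax5 hz hz1, h21, rest_of_le ax1 ax2 ax5 hz hz2] at h4
    -- h4 : sub y1 (sub y1 y2) = y2
    have h4' := ax4 y2 y1 a
    rw [rest_of_le ax1 ax2 ax5 hz hz2, h12, rest_of_le ax1 ax2 ax5 hz hz1] at h4'
    -- h4' : sub y2 (sub y2 y1) = y1
    calc y1 = sub y2 (sub y2 y1) := h4'.symm
      _ = sub y1 (sub y1 y2) := (ax2 y1 y2).symm
      _ = y2 := h4
  -- Goal 2 : theta (a - b) = theta a \ theta b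
  have G2 : ∀ a b : A, theta sub rest z (sub a b) = theta sub rest z a \ theta sub rest z b := by
    intro a b
    ext ⟨x, y⟩
    rw [Set.mem_diff, mem_theta, mem_theta, mem_theta]
    constructor
    · rintro ⟨hx, hy, hq, hle⟩
      have h := atom_sub_fwd ax1 ax2 ax3 hz hy.1 (z_of_sle ax3 hz hle)
      refine ⟨⟨hx, hy, hq, sle_of_z ax1 hz h.1⟩, ?_⟩
      rintro ⟨-, -, -, hleb⟩
      exact h.2 (z_of_sle ax3 hz hleb)
    · rintro ⟨⟨hx, hy, hq, hlea⟩, hnot⟩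
      have hnb : sub y b ≠ z := by
        intro hb
        exact hnot ⟨hx, hy, hq, sle_of_z ax1 hz hb⟩
      exact ⟨hx, hy, hq,
        sle_of_z ax1 hz (atom_sub_bwd ax1 ax2 ax3 hz hy (z_of_sle ax3 hz hlea) hnb)⟩
  -- Goal 3 : theta (a ▷ b) = theta a ▷ theta b
  have G3 : ∀ a b : A, theta sub rest z (rest a b) =
      restr (theta sub rest z a) (theta sub rest z b) := by
    intro a b
    ext ⟨x, y⟩
    show _ ↔ (∃ y', (x, y') ∈ theta sub rest z a) ∧ (x, y) ∈ theta sub rest z b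
    rw [mem_theta, mem_theta]
    constructor
    · rintro ⟨hx, hy, hq, hle⟩
      have hzs : sub y (rest a b) = z := z_of_sle ax3 hz hle
      have hyb : sub y b = z :=
        sle_trans' ax1 ax2 ax3 hz hzs (restD2 ax1 ax2 ax3 ax4 ax5 hz a b)
      -- y ≼ a
      have hsy : rest (rest a b) y = y := prec_of_le ax1 ax2 ax3 ax4 ax5 hz hzs
      have hsa : rest a (rest a b) = rest a b := restJ0 ax1 ax2 ax3 ax4 ax5 hz a b
      have hay : rest a y = y := prec_trans ax1 ax2 ax3 ax4 ax5 hz hsy hsa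
      -- c0 := rest y a is nonzero
      have hc0 : rest y a ≠ z := by
        intro hc
        have h4 := ax4 y a y
        rw [restD1 ax1 ax5 hz y, hay, hc, rest_zero ax1 ax2 ax5 hz y, hz y, sz ax1 hz y] at h4
        exact hy.1 h4
      obtain ⟨y1, hy1atom, hy1le⟩ := atomic (rest y a) hc0
      have hy1c0 : sub y1 (rest y a) = z := z_of_sle ax3 hz hy1le
      have hy1a : sub y1 a = z :=
        sle_trans' ax1 ax2 ax3 hz hy1c0 (restD2 ax1 ax2 ax3 ax4 ax5 hz y a)
      -- y1 ∼ y
      have hp1 : rest (rest y a) y1 = y1 := prec_of_le ax1 ax2 ax3 ax4 ax5 hz hy1c0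
      have hp2 : rest y (rest y a) = rest y a := restJ0 ax1 ax2 ax3 ax4 ax5 hz y a
      have hyy1 : rest y y1 = y1 := prec_trans ax1 ax2 ax3 ax4 ax5 hz hp1 hp2
      have hy1y : rest y1 y = y :=
        atom_prec ax1 ax2 ax3 ax4 ax5 hz hy hy1atom.1 hyy1
      refine ⟨⟨y1, ?_⟩, hx, hy, hq, sle_of_z ax1 hz hyb⟩
      rw [mem_theta]
      exact ⟨hx, hy1atom,
        ⟨prec_trans ax1 ax2 ax3 ax4 ax5 hz hq.1 hy1y,
         prec_trans ax1 ax2 ax3 ax4 ax5 hz hyy1 hq.2⟩,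
        sle_of_z ax1 hz hy1a⟩
    · rintro ⟨⟨y1, hmem1⟩, hx, hy, hq, hleb⟩
      rw [mem_theta] at hmem1
      obtain ⟨-, hy1, hq1, hle1⟩ := hmem1
      have hy1a : sub y1 a = z := z_of_sle ax3 hz hle1
      have hyb : sub y b = z := z_of_sle ax3 hz hleb
      have hyy1 : rest y1 y = y := prec_trans ax1 ax2 ax3 ax4 ax5 hz hq.2 hq1.1
      have hay1 : rest a y1 = y1 := prec_of_le ax1 ax2 ax3 ax4 ax5 hz hy1a
      have hay : rest a y = y := prec_trans ax1 ax2 ax3 ax4 ax5 hz hyy1 hay1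
      have h4 := ax4 a y b
      rw [hay, rest_of_le ax1 ax2 ax5 hz hyb] at h4
      -- h4 : meet (rest a b) y = y
      exact ⟨hx, hy, hq, sle_of_z ax1 hz (le_of_meet_eq ax1 ax2 ax3 hz h4)⟩
  -- Goal 4 : injectivity
  have key : ∀ u v : A, theta sub rest z u = theta sub rest z v → sub u v = z := by
    intro u v huv
    by_contra hzz
    obtain ⟨y, hyatom, hyle⟩ := atomic (sub u v) hzz
    have hmem : (y, y) ∈ theta sub rest z (sub u v) :=
      ⟨hyatom, hyatom, ⟨restD1 ax1 ax5 hz y, restD1 ax1 ax5 hz y⟩, hyle⟩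
    rw [G2 u v] at hmem
    obtain ⟨hmu, hnv⟩ := hmem
    rw [huv] at hmu
    exact hnv hmu
  exact ⟨G1, G2, G3, fun a b h =>
    le_antisym ax1 ax2 hz (key a b h) (key b a h.symm)⟩
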